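/- arXiv:1105.2995 — 2 statements merged into one kernel-verified Lean document; each statement's English description precedes it below -/
import Mathlib

section
/- Let a ≤ 0 and g : ℝ → ℝ be differentiable with g(0) = 0 and g' ∈ L². Then for t ∈ ℝ, the derivative in t of ∫_0^t e^{a|t-x|} g(x) dx equals ∫_0^t e^{a|t-x|} g'(x) dx. -/
open MeasureTheory

/-- For `a ≤ 0` and `g : ℝ → ℝ` differentiable with `g 0 = 0` and
`g' ∈ L²`, the derivative in `t` of `∫_0^t e^{a|t-x|} g(x) dx` equals
`∫_0^t e^{a|t-x|} g'(x) dx`. -/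
theorem stmt1 (a : ℝ) (ha : a ≤ 0) (g : ℝ → ℝ) (hg : Differentiable ℝ g)
    (hg0 : g 0 = 0) (hg' : MemLp (deriv g) 2 (volume : Measure ℝ)) (t : ℝ) :
    HasDerivAt (fun s : ℝ => ∫ x in (0:ℝ)..s, Real.exp (a * |s - x|) * g x)
      (∫ x in (0:ℝ)..t, Real.exp (a * |t - x|) * deriv g x) t := by
  have hgc : Continuous g := hg.continuous
  -- interval integrability of deriv g
  have hDint : ∀ u v : ℝ, IntervalIntegrable (deriv g) volume u v := by
    intro u v
    rw [intervalIntegrable_iff]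
    haveI : IsFiniteMeasure (volume.restrict (Set.uIoc u v)) := by
      constructor
      rw [Measure.restrict_apply_univ]
      exact measure_Ioc_lt_top
    exact ((hg'.restrict (Set.uIoc u v)).mono_exponent (by norm_num)).integrable le_rfl
  -- exponential derivative helper
  have hexp : ∀ b s : ℝ, HasDerivAt (fun x : ℝ => Real.exp (b * x)) (b * Real.exp (b * s)) s := by
    intro b s
    have h1 : HasDerivAt (fun x : ℝ => b * x) b s := by
      simpa using (hasDerivAt_id s).const_mul b
    simpa [mul_comm] using h1.exp
  -- integration by parts identity
  have hIBP : ∀ b s : ℝ, (∫ x in (0:ℝ)..s, Real.exp (b * x) * deriv g x)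
      = Real.exp (b * s) * g s - b * ∫ x in (0:ℝ)..s, Real.exp (b * x) * g x := by
    intro b s
    have h := intervalIntegral.integral_mul_deriv_eq_deriv_mul
      (u := fun x => Real.exp (b * x)) (u' := fun x => b * Real.exp (b * x))
      (v := g) (v' := deriv g) (a := 0) (b := s)
      (fun x _ => hexp b x) (fun x _ => (hg x).hasDerivAt)
      ((continuous_const.mul (Real.continuous_exp.comp (continuous_const.mul continuous_id))).intervalIntegrable 0 s)
      (hDint 0 s)
    rw [h, hg0]
    have : ∀ x : ℝ, b * Real.exp (b * x) * g x = b * (Real.exp (b * x) * g x) := fun x => by ring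
    simp_rw [this, intervalIntegral.integral_const_mul]
    ring
  rcases lt_trichotomy t 0 with ht | ht | ht
  · -- t < 0 : F s = e^{-as} * ∫_0^s e^{ax} g x near t
    have hFE : (fun s : ℝ => ∫ x in (0:ℝ)..s, Real.exp (a * |s - x|) * g x)
        =ᶠ[nhds t] (fun s : ℝ => Real.exp (-a * s) * ∫ x in (0:ℝ)..s, Real.exp (a * x) * g x) := by
      filter_upwards [eventually_lt_nhds ht] with s hs
      have hcong : ∀ x ∈ Set.uIcc (0:ℝ) s,
          Real.exp (a * |s - x|) * g x = Real.exp (-a * s) * (Real.exp (a * x) * g x) := by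
        intro x hx
        rw [Set.uIcc_of_ge hs.le] at hx
        have habs : |s - x| = x - s := by
          rw [abs_of_nonpos (by linarith [hx.1])]; ring
        rw [habs, ← mul_assoc, ← Real.exp_add]
        ring_nf
      rw [intervalIntegral.integral_congr hcong, intervalIntegral.integral_const_mul]
    have h1 := hexp (-a) t
    have h2 : HasDerivAt (fun s : ℝ => ∫ x in (0:ℝ)..s, Real.exp (a * x) * g x)
        (Real.exp (a * t) * g t) t := by
      have hc : Continuous fun x : ℝ => Real.exp (a * x) * g x :=
        (Real.continuous_exp.comp (continuous_const.mul continuous_id)).mul hgc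
      exact intervalIntegral.integral_hasDerivAt_right (hc.intervalIntegrable 0 t)
        (hc.stronglyMeasurableAtFilter _ _) hc.continuousAt
    have hmul := h1.mul h2
    have hval : (∫ x in (0:ℝ)..t, Real.exp (a * |t - x|) * deriv g x)
        = -a * Real.exp (-a * t) * (∫ x in (0:ℝ)..t, Real.exp (a * x) * g x)
          + Real.exp (-a * t) * (Real.exp (a * t) * g t) := by
      have hcong : ∀ x ∈ Set.uIcc (0:ℝ) t,
          Real.exp (a * |t - x|) * deriv g x = Real.exp (-a * t) * (Real.exp (a * x) * deriv g x) := by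
        intro x hx
        rw [Set.uIcc_of_ge ht.le] at hx
        have habs : |t - x| = x - t := by
          rw [abs_of_nonpos (by linarith [hx.1])]; ring
        rw [habs, ← mul_assoc, ← Real.exp_add]
        ring_nf
      rw [intervalIntegral.integral_congr hcong, intervalIntegral.integral_const_mul, hIBP a t]
      ring
    rw [hval]
    exact hmul.congr_of_eventuallyEq hFE
  · -- t = 0
    subst ht
    rw [intervalIntegral.integral_same]
    rw [hasDerivAt_iff_isLittleO]
    have hF0 : (∫ x in (0:ℝ)..(0:ℝ), Real.exp (a * |0 - x|) * g x) = 0 :=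
      intervalIntegral.integral_same
    rw [Asymptotics.isLittleO_iff]
    intro c hc
    have htend : Filter.Tendsto g (nhds 0) (nhds 0) := by
      have := hgc.tendsto 0; rwa [hg0] at this
    have hev : ∀ᶠ x : ℝ in nhds 0, |g x| ≤ c := by
      have := (Metric.tendsto_nhds.mp htend) c hc
      filter_upwards [this] with x hx
      rw [Real.dist_eq, sub_zero] at hx
      exact hx.le
    rcases Metric.eventually_nhds_iff.mp hev with ⟨δ, hδ, hball⟩
    have : ∀ᶠ s : ℝ in nhds 0, dist s 0 < δ := Metric.tendsto_nhds.mp Filter.tendsto_id δ hδ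
    filter_upwards [this] with s hs
    have hbd : ∀ x ∈ Set.uIoc (0:ℝ) s, ‖Real.exp (a * |s - x|) * g x‖ ≤ c := by
      intro x hx
      have hxs : |x| ≤ |s| := by
        rcases le_or_gt 0 s with h | h
        · rw [Set.uIoc_of_le h] at hx
          rw [abs_of_pos hx.1, abs_of_nonneg h]; exact hx.2
        · rw [Set.uIoc_of_ge h.le] at hx
          rw [abs_of_nonpos hx.2, abs_of_neg h]; linarith [hx.1]
      have hxδ : dist x 0 < δ := by
        rw [Real.dist_eq, sub_zero]
        calc |x| ≤ |s| := hxs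
          _ < δ := by rwa [Real.dist_eq, sub_zero] at hs
      have h1 : Real.exp (a * |s - x|) ≤ 1 :=
        Real.exp_le_one_iff.mpr (mul_nonpos_of_nonpos_of_nonneg ha (abs_nonneg _))
      have h2 : |g x| ≤ c := hball hxδ
      rw [Real.norm_eq_abs, abs_mul, abs_of_pos (Real.exp_pos _)]
      calc Real.exp (a * |s - x|) * |g x| ≤ 1 * |g x| :=
            mul_le_mul_of_nonneg_right h1 (abs_nonneg _)
        _ = |g x| := one_mul _
        _ ≤ c := h2
    have hnorm := intervalIntegral.norm_integral_le_of_norm_le_const hbd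
    simp only [hF0, smul_zero, sub_zero, sub_zero] at *
    simpa [Real.norm_eq_abs] using hnorm
  · -- t > 0 : F s = e^{as} * ∫_0^s e^{-ax} g x near t
    have hFE : (fun s : ℝ => ∫ x in (0:ℝ)..s, Real.exp (a * |s - x|) * g x)
        =ᶠ[nhds t] (fun s : ℝ => Real.exp (a * s) * ∫ x in (0:ℝ)..s, Real.exp (-a * x) * g x) := by
      filter_upwards [eventually_gt_nhds ht] with s hs
      have hcong : ∀ x ∈ Set.uIcc (0:ℝ) s,
          Real.exp (a * |s - x|) * g x = Real.exp (a * s) * (Real.exp (-a * x) * g x) := by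
        intro x hx
        rw [Set.uIcc_of_le hs.le] at hx
        have habs : |s - x| = s - x := abs_of_nonneg (by linarith [hx.2])
        rw [habs, ← mul_assoc, ← Real.exp_add]
        ring_nf
      rw [intervalIntegral.integral_congr hcong, intervalIntegral.integral_const_mul]
    have h1 := hexp a t
    have h2 : HasDerivAt (fun s : ℝ => ∫ x in (0:ℝ)..s, Real.exp (-a * x) * g x)
        (Real.exp (-a * t) * g t) t := by
      have hc : Continuous fun x : ℝ => Real.exp (-a * x) * g x :=
        (Real.continuous_exp.comp (continuous_const.mul continuous_id)).mul hgc
      exact intervalIntegral.integral_hasDerivAt_right (hc.intervalIntegrable 0 t)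
        (hc.stronglyMeasurableAtFilter _ _) hc.continuousAt
    have hmul := h1.mul h2
    have hval : (∫ x in (0:ℝ)..t, Real.exp (a * |t - x|) * deriv g x)
        = a * Real.exp (a * t) * (∫ x in (0:ℝ)..t, Real.exp (-a * x) * g x)
          + Real.exp (a * t) * (Real.exp (-a * t) * g t) := by
      have hcong : ∀ x ∈ Set.uIcc (0:ℝ) t,
          Real.exp (a * |t - x|) * deriv g x = Real.exp (a * t) * (Real.exp (-a * x) * deriv g x) := by
        intro x hx
        rw [Set.uIcc_of_le ht.le] at hx
        have habs : |t - x| = t - x := abs_of_nonneg (by linarith [hx.2])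
        rw [habs, ← mul_assoc, ← Real.exp_add]
        ring_nf
      rw [intervalIntegral.integral_congr hcong, intervalIntegral.integral_const_mul, hIBP (-a) t]
      ring
    rw [hval]
    exact hmul.congr_of_eventuallyEq hFE
end

section
/- Let T, β > 0 with T ≥ √2/√β, and define the kernel N_T(τ,t') = (|τ|^{1/2}/|t'|^{3/2})·|K₂(T,τ,t')|·χ_{{1/T < |t'| ≤ β|τ|T}} on the region |τ| > 1/2, where |K₂(T,τ,t')| ≤ C·min{|t'|/|τ|, |t'|²/|τ|²}. Then sup_τ ∫_ℝ |N_T(τ,t')| dt' ≤ C·β^{1/2}·T^{1/2} and sup_{t'} ∫_{|τ|>1/2} |N_T(τ,t')| dτ ≤ C·β^{1/2}·T^{1/2}. -/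
open MeasureTheory Classical Set ENNReal

lemma lint_abs (f : ℝ → ℝ≥0∞) :
    ∫⁻ x : ℝ, f |x| = 2 * ∫⁻ x in Set.Ioi (0:ℝ), f x := by
  have hneg : MeasurePreserving (Neg.neg : ℝ → ℝ) volume volume :=
    Measure.measurePreserving_neg _
  have hemb : MeasurableEmbedding (Neg.neg : ℝ → ℝ) :=
    (Homeomorph.neg ℝ).measurableEmbedding
  have h1 : ∫⁻ x in Set.Ioi (0:ℝ), f |x| = ∫⁻ x in Set.Iio (0:ℝ), f |x| := by
    have h := hneg.setLIntegral_comp_emb hemb (fun x => f |x|) (Set.Ioi 0)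
    simp only [abs_neg] at h
    rw [h]
    congr 1
    ext x
    simp [Set.image_neg]
  have h2 : ∫⁻ x in Set.Ici (0:ℝ), f |x| = ∫⁻ x in Set.Ioi (0:ℝ), f |x| := by
    rw [Measure.restrict_congr_set Ioi_ae_eq_Ici]
  have h3 : ∫⁻ x in Set.Ioi (0:ℝ), f |x| = ∫⁻ x in Set.Ioi (0:ℝ), f x := by
    refine setLIntegral_congr_fun measurableSet_Ioi ?_
    intro x hx
    exact congrArg f (abs_of_pos hx)
  calc ∫⁻ x : ℝ, f |x|
      = (∫⁻ x in Set.Iio (0:ℝ), f |x|) + ∫⁻ x in (Set.Iio (0:ℝ))ᶜ, f |x| :=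
        (lintegral_add_compl _ measurableSet_Iio).symm
    _ = 2 * ∫⁻ x in Set.Ioi (0:ℝ), f x := by
        rw [compl_Iio, h2, ← h1, h3, two_mul]

lemma lemA {R : ℝ} (hR : 0 < R) :
    ∫⁻ x : ℝ, (if |x| ≤ R then ENNReal.ofReal (|x| ^ (-(1:ℝ)/2)) else 0)
      ≤ ENNReal.ofReal (4 * Real.sqrt R) := by
  have h := lint_abs (fun y => if y ≤ R then ENNReal.ofReal (y ^ (-(1:ℝ)/2)) else 0)
  rw [h]
  have hfun : (fun x => if x ≤ R then ENNReal.ofReal (x ^ (-(1:ℝ)/2)) else 0)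
      = Set.indicator (Set.Iic R) (fun x => ENNReal.ofReal (x ^ (-(1:ℝ)/2))) := by
    ext x; by_cases hx : x ≤ R <;> simp [Set.indicator_apply, hx]
  have hind : ∫⁻ x in Set.Ioi (0:ℝ),
      (if x ≤ R then ENNReal.ofReal (x ^ (-(1:ℝ)/2)) else 0)
      = ∫⁻ x in Set.Ioc (0:ℝ) R, ENNReal.ofReal (x ^ (-(1:ℝ)/2)) := by
    rw [hfun, lintegral_indicator measurableSet_Iic,
      Measure.restrict_restrict measurableSet_Iic, Set.inter_comm,
      Set.Ioi_inter_Iic]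
  rw [hind]
  have hInt : IntegrableOn (fun x : ℝ => x ^ (-(1:ℝ)/2)) (Set.Ioc 0 R) := by
    have := intervalIntegral.intervalIntegrable_rpow' (a := 0) (b := R)
      (r := -(1:ℝ)/2) (by norm_num)
    rwa [intervalIntegrable_iff_integrableOn_Ioc_of_le hR.le] at this
  rw [← ofReal_integral_eq_lintegral_ofReal hInt
    ((ae_restrict_iff' measurableSet_Ioc).2
      (Filter.Eventually.of_forall fun x hx => Real.rpow_nonneg hx.1.le _))]
  have hval : ∫ x in Set.Ioc (0:ℝ) R, x ^ (-(1:ℝ)/2) = 2 * Real.sqrt R := by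
    rw [← intervalIntegral.integral_of_le hR.le,
      integral_rpow (Or.inl (by norm_num)),
      show (-(1:ℝ)/2 + 1) = 1/2 by norm_num,
      Real.zero_rpow (by norm_num), Real.sqrt_eq_rpow]
    ring
  rw [hval, show (4:ℝ) * Real.sqrt R = 2 * (2 * Real.sqrt R) by ring,
    ENNReal.ofReal_mul (by norm_num), ENNReal.ofReal_ofNat,
    ENNReal.ofReal_mul (by norm_num), ENNReal.ofReal_ofNat,
    ENNReal.ofReal_mul (by norm_num), ENNReal.ofReal_ofNat]

lemma lemB {a : ℝ} (ha : 0 < a) :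
    ∫⁻ x : ℝ, (if a ≤ |x| then ENNReal.ofReal (|x| ^ (-(3:ℝ)/2)) else 0)
      ≤ ENNReal.ofReal (4 / Real.sqrt a) := by
  have h := lint_abs (fun y => if a ≤ y then ENNReal.ofReal (y ^ (-(3:ℝ)/2)) else 0)
  rw [h]
  have hfun : (fun x => if a ≤ x then ENNReal.ofReal (x ^ (-(3:ℝ)/2)) else 0)
      = Set.indicator (Set.Ici a) (fun x => ENNReal.ofReal (x ^ (-(3:ℝ)/2))) := by
    ext x; by_cases hx : a ≤ x <;> simp [Set.indicator_apply, hx]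
  rw [hfun, lintegral_indicator measurableSet_Ici,
    Measure.restrict_restrict measurableSet_Ici,
    show Set.Ici a ∩ Set.Ioi (0:ℝ) = Set.Ici a from
      Set.inter_eq_self_of_subset_left (fun x hx => lt_of_lt_of_le ha hx),
    ← Measure.restrict_congr_set MeasureTheory.Ioi_ae_eq_Ici]
  have hInt : IntegrableOn (fun x : ℝ => x ^ (-(3:ℝ)/2)) (Set.Ioi a) :=
    integrableOn_Ioi_rpow_of_lt (by norm_num) ha
  rw [← ofReal_integral_eq_lintegral_ofReal hInt
    ((ae_restrict_iff' measurableSet_Ioi).2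
      (Filter.Eventually.of_forall fun x hx => Real.rpow_nonneg (ha.trans hx).le _))]
  have hval : ∫ x in Set.Ioi a, x ^ (-(3:ℝ)/2) = 2 / Real.sqrt a := by
    rw [integral_Ioi_rpow_of_lt (by norm_num) ha,
      show (-(3:ℝ)/2 + 1) = -(1/2) by norm_num,
      Real.rpow_neg ha.le, ← Real.sqrt_eq_rpow]
    ring
  rw [hval, show (4:ℝ)/Real.sqrt a = 2*(2/Real.sqrt a) by ring,
    ENNReal.ofReal_mul (by norm_num), ENNReal.ofReal_ofNat]


/-- Schur-type kernel bounds for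
`N_T(τ,t') = (|τ|^{1/2}/|t'|^{3/2}) |K₂(T,τ,t')| χ_{1/T < |t'| ≤ β|τ|T}` on `|τ| > 1/2`,
assuming `|K₂| ≤ C min(|t'|/|τ|, |t'|²/|τ|²)`: both the `t'`-integrals (uniformly in
`τ`, `|τ| > 1/2`) and the `τ`-integrals over `{|τ| > 1/2}` (uniformly in `t'`) are
bounded by `C' C β^{1/2} T^{1/2}`. -/
theorem stmt11 :
    ∃ C' > 0, ∀ (T β C : ℝ), 0 < β → 0 < C → Real.sqrt 2 / Real.sqrt β ≤ T →
      ∀ K₂ : ℝ → ℝ → ℝ, Measurable (Function.uncurry K₂) →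
      (∀ τ t' : ℝ, 1/2 < |τ| →
          |K₂ τ t'| ≤ C * min (|t'| / |τ|) (|t'| ^ 2 / |τ| ^ 2)) →
      (∀ τ : ℝ, 1/2 < |τ| →
          (∫⁻ t' : ℝ, ENNReal.ofReal
              (if 1/T < |t'| ∧ |t'| ≤ β * |τ| * T then
                |τ| ^ ((1:ℝ)/2) / |t'| ^ ((3:ℝ)/2) * |K₂ τ t'| else 0))
            ≤ ENNReal.ofReal (C' * C * β ^ ((1:ℝ)/2) * T ^ ((1:ℝ)/2))) ∧
      (∀ t' : ℝ,
          (∫⁻ τ in {τ : ℝ | 1/2 < |τ|}, ENNReal.ofReal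
              (if 1/T < |t'| ∧ |t'| ≤ β * |τ| * T then
                |τ| ^ ((1:ℝ)/2) / |t'| ^ ((3:ℝ)/2) * |K₂ τ t'| else 0))
            ≤ ENNReal.ofReal (C' * C * β ^ ((1:ℝ)/2) * T ^ ((1:ℝ)/2))) := by
  refine ⟨4, by norm_num, ?_⟩
  intro T β C hβ hC hTlb K₂ _ hK
  have hT : 0 < T := lt_of_lt_of_le (by positivity) hTlb
  have hβhalf : β ^ ((1:ℝ)/2) = Real.sqrt β := (Real.sqrt_eq_rpow β).symm
  have hThalf : T ^ ((1:ℝ)/2) = Real.sqrt T := (Real.sqrt_eq_rpow T).symm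
  constructor
  · intro τ hτ
    have hτ0 : 0 < |τ| := lt_trans (by norm_num) hτ
    have hR : 0 < β * |τ| * T := by positivity
    have hpt : ∀ t : ℝ, ENNReal.ofReal
        (if 1/T < |t| ∧ |t| ≤ β * |τ| * T then
          |τ| ^ ((1:ℝ)/2) / |t| ^ ((3:ℝ)/2) * |K₂ τ t| else 0)
        ≤ ENNReal.ofReal (C * |τ| ^ (-(1:ℝ)/2)) *
          (if |t| ≤ β * |τ| * T then ENNReal.ofReal (|t| ^ (-(1:ℝ)/2)) else 0) := by
      intro t
      by_cases hcond : 1/T < |t| ∧ |t| ≤ β * |τ| * T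
      · have ht0 : 0 < |t| := lt_trans (by positivity) hcond.1
        rw [if_pos hcond, if_pos hcond.2, ← ENNReal.ofReal_mul (by positivity)]
        apply ENNReal.ofReal_le_ofReal
        have h1 : |K₂ τ t| ≤ C * (|t| / |τ|) :=
          (hK τ t hτ).trans (mul_le_mul_of_nonneg_left (min_le_left _ _) hC.le)
        calc |τ| ^ ((1:ℝ)/2) / |t| ^ ((3:ℝ)/2) * |K₂ τ t|
            ≤ |τ| ^ ((1:ℝ)/2) / |t| ^ ((3:ℝ)/2) * (C * (|t| / |τ|)) :=
              mul_le_mul_of_nonneg_left h1 (by positivity)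
          _ = C * (|τ| ^ ((1:ℝ)/2) / |τ| ^ (1:ℝ)) * (|t| ^ (1:ℝ) / |t| ^ ((3:ℝ)/2)) := by
              rw [Real.rpow_one, Real.rpow_one]; ring
          _ = C * |τ| ^ ((1:ℝ)/2 - 1) * |t| ^ ((1:ℝ) - 3/2) := by
              rw [Real.rpow_sub hτ0, Real.rpow_sub ht0]
          _ = C * |τ| ^ (-(1:ℝ)/2) * |t| ^ (-(1:ℝ)/2) := by norm_num
      · rw [if_neg hcond, ENNReal.ofReal_zero]; exact zero_le
    calc ∫⁻ t : ℝ, ENNReal.ofReal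
          (if 1/T < |t| ∧ |t| ≤ β * |τ| * T then
            |τ| ^ ((1:ℝ)/2) / |t| ^ ((3:ℝ)/2) * |K₂ τ t| else 0)
        ≤ ∫⁻ t : ℝ, ENNReal.ofReal (C * |τ| ^ (-(1:ℝ)/2)) *
            (if |t| ≤ β * |τ| * T then ENNReal.ofReal (|t| ^ (-(1:ℝ)/2)) else 0) :=
          lintegral_mono hpt
      _ = ENNReal.ofReal (C * |τ| ^ (-(1:ℝ)/2)) *
            ∫⁻ t : ℝ, (if |t| ≤ β * |τ| * T then ENNReal.ofReal (|t| ^ (-(1:ℝ)/2)) else 0) :=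
          lintegral_const_mul' _ _ ENNReal.ofReal_ne_top
      _ ≤ ENNReal.ofReal (C * |τ| ^ (-(1:ℝ)/2)) *
            ENNReal.ofReal (4 * Real.sqrt (β * |τ| * T)) :=
          mul_le_mul_right (lemA hR) _
      _ = ENNReal.ofReal (C * |τ| ^ (-(1:ℝ)/2) * (4 * Real.sqrt (β * |τ| * T))) :=
          (ENNReal.ofReal_mul (by positivity)).symm
      _ ≤ ENNReal.ofReal (4 * C * β ^ ((1:ℝ)/2) * T ^ ((1:ℝ)/2)) := by
          apply ENNReal.ofReal_le_ofReal
          apply le_of_eq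
          rw [hβhalf, hThalf,
            show (-(1:ℝ)/2) = -((1:ℝ)/2) by norm_num,
            Real.rpow_neg (abs_nonneg τ), ← Real.sqrt_eq_rpow,
            Real.sqrt_mul (by positivity) T, Real.sqrt_mul hβ.le]
          have hst : Real.sqrt |τ| ≠ 0 := by positivity
          field_simp
  · intro t
    have hS : MeasurableSet {τ : ℝ | 1/2 < |τ|} :=
      measurableSet_lt measurable_const continuous_abs.measurable
    by_cases ht : 1/T < |t|
    · have ht0 : 0 < |t| := lt_trans (by positivity) ht
      have hβT : 0 < β * T := by positivity
      have ha : 0 < |t| / (β * T) := by positivity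
      have hpt : ∀ τ ∈ {τ : ℝ | 1/2 < |τ|}, ENNReal.ofReal
          (if 1/T < |t| ∧ |t| ≤ β * |τ| * T then
            |τ| ^ ((1:ℝ)/2) / |t| ^ ((3:ℝ)/2) * |K₂ τ t| else 0)
          ≤ ENNReal.ofReal (C * |t| ^ ((1:ℝ)/2)) *
            (if |t| / (β * T) ≤ |τ| then ENNReal.ofReal (|τ| ^ (-(3:ℝ)/2)) else 0) := by
        intro τ hτ
        have hτ0 : 0 < |τ| := lt_trans (by norm_num) hτ
        by_cases hcond : 1/T < |t| ∧ |t| ≤ β * |τ| * T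
        · have hge : |t| / (β * T) ≤ |τ| := by
            rw [div_le_iff₀ hβT]
            calc |t| ≤ β * |τ| * T := hcond.2
              _ = |τ| * (β * T) := by ring
          rw [if_pos hcond, if_pos hge, ← ENNReal.ofReal_mul (by positivity)]
          apply ENNReal.ofReal_le_ofReal
          have h1 : |K₂ τ t| ≤ C * (|t| ^ 2 / |τ| ^ 2) :=
            (hK τ t hτ).trans (mul_le_mul_of_nonneg_left (min_le_right _ _) hC.le)
          calc |τ| ^ ((1:ℝ)/2) / |t| ^ ((3:ℝ)/2) * |K₂ τ t|
              ≤ |τ| ^ ((1:ℝ)/2) / |t| ^ ((3:ℝ)/2) * (C * (|t| ^ 2 / |τ| ^ 2)) :=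
                mul_le_mul_of_nonneg_left h1 (by positivity)
            _ = C * (|t| ^ ((2:ℝ)) / |t| ^ ((3:ℝ)/2)) * (|τ| ^ ((1:ℝ)/2) / |τ| ^ ((2:ℝ))) := by
                rw [show |t| ^ (2:ℕ) = |t| ^ ((2:ℝ)) by
                      rw [← Real.rpow_natCast |t| 2]; norm_num,
                    show |τ| ^ (2:ℕ) = |τ| ^ ((2:ℝ)) by
                      rw [← Real.rpow_natCast |τ| 2]; norm_num]
                ring
            _ = C * |t| ^ ((2:ℝ) - 3/2) * |τ| ^ ((1:ℝ)/2 - 2) := by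
                rw [Real.rpow_sub ht0, Real.rpow_sub hτ0]
            _ = C * |t| ^ ((1:ℝ)/2) * |τ| ^ (-(3:ℝ)/2) := by norm_num
        · rw [if_neg hcond, ENNReal.ofReal_zero]; exact zero_le
      calc ∫⁻ τ in {τ : ℝ | 1/2 < |τ|}, ENNReal.ofReal
            (if 1/T < |t| ∧ |t| ≤ β * |τ| * T then
              |τ| ^ ((1:ℝ)/2) / |t| ^ ((3:ℝ)/2) * |K₂ τ t| else 0)
          ≤ ∫⁻ τ in {τ : ℝ | 1/2 < |τ|}, ENNReal.ofReal (C * |t| ^ ((1:ℝ)/2)) *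
              (if |t| / (β * T) ≤ |τ| then ENNReal.ofReal (|τ| ^ (-(3:ℝ)/2)) else 0) :=
            lintegral_mono_ae ((ae_restrict_iff' hS).2 (Filter.Eventually.of_forall hpt))
        _ ≤ ∫⁻ τ : ℝ, ENNReal.ofReal (C * |t| ^ ((1:ℝ)/2)) *
              (if |t| / (β * T) ≤ |τ| then ENNReal.ofReal (|τ| ^ (-(3:ℝ)/2)) else 0) :=
            setLIntegral_le_lintegral _ _
        _ = ENNReal.ofReal (C * |t| ^ ((1:ℝ)/2)) *
              ∫⁻ τ : ℝ, (if |t| / (β * T) ≤ |τ| then ENNReal.ofReal (|τ| ^ (-(3:ℝ)/2)) else 0) :=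
            lintegral_const_mul' _ _ ENNReal.ofReal_ne_top
        _ ≤ ENNReal.ofReal (C * |t| ^ ((1:ℝ)/2)) *
              ENNReal.ofReal (4 / Real.sqrt (|t| / (β * T))) :=
            mul_le_mul_right (lemB ha) _
        _ = ENNReal.ofReal (C * |t| ^ ((1:ℝ)/2) * (4 / Real.sqrt (|t| / (β * T)))) :=
            (ENNReal.ofReal_mul (by positivity)).symm
        _ ≤ ENNReal.ofReal (4 * C * β ^ ((1:ℝ)/2) * T ^ ((1:ℝ)/2)) := by
            apply ENNReal.ofReal_le_ofReal
            apply le_of_eq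
            rw [hβhalf, hThalf, ← Real.sqrt_eq_rpow,
              Real.sqrt_div ht0.le, Real.sqrt_mul hβ.le]
            have h1 : Real.sqrt |t| ≠ 0 := by positivity
            have h2 : Real.sqrt β ≠ 0 := by positivity
            have h3 : Real.sqrt T ≠ 0 := by positivity
            field_simp
    · have h0 : ∫⁻ τ in {τ : ℝ | 1/2 < |τ|}, ENNReal.ofReal
          (if 1/T < |t| ∧ |t| ≤ β * |τ| * T then
            |τ| ^ ((1:ℝ)/2) / |t| ^ ((3:ℝ)/2) * |K₂ τ t| else 0)
          = ∫⁻ _ in {τ : ℝ | 1/2 < |τ|}, (0:ℝ≥0∞) :=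
        setLIntegral_congr_fun hS (fun τ _ => by
          simp only [if_neg fun (hcc : 1/T < |t| ∧ |t| ≤ β * |τ| * T) => ht hcc.1, ENNReal.ofReal_zero])
      rw [h0, lintegral_zero]
      exact zero_le
end
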